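/- The counting function ζ(m,5) of 5-deviation sets satisfies ζ(m,5) = ((2+√3)^⌊(m+1)/2⌋ + (2−√3)^⌊(m+1)/2⌋ + 2^⌊(m+1)/2⌋)/6 for all m ≥ 1. -/

import Mathlib

/-- `α` is a `δ`-deviation set of size `m`: a finite sequence of positive integers
summing to `m`, whose total alternating sum has absolute value at most `1`,
and all of whose partial alternating sums have absolute value at most `δ`. -/
def IsDevSet (m δ : ℕ) (α : List ℕ) : Prop :=
  (∀ a ∈ α, 0 < a) ∧ α.sum = m ∧
  |∑ i ∈ Finset.range α.length, (-1 : ℤ) ^ i * (α.getD i 0 : ℤ)| ≤ 1 ∧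
  ∀ k : ℕ, |∑ i ∈ Finset.range k, (-1 : ℤ) ^ i * (α.getD i 0 : ℤ)| ≤ (δ : ℤ)

/-- `zeta m δ` is the number of `δ`-deviation sets of size `m`. -/
noncomputable def zeta (m δ : ℕ) : ℕ := Nat.card {α : List ℕ // IsDevSet m δ α}

/-- Transfer-matrix style count. -/
def M : ℕ → ℤ → ℕ
  | 0, s => if |s| ≤ 1 then 1 else 0
  | 1, s => if |s + 1| ≤ 1 then 1 else 0
  | (m + 2), s =>
    if s ≤ 4 then M (m + 1) (s + 1) + (if -6 ≤ s then M (m + 1) (-(s + 1)) else 0) else 0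

lemma M_zero (s : ℤ) : M 0 s = if |s| ≤ 1 then 1 else 0 := rfl
lemma M_one (s : ℤ) : M 1 s = if |s + 1| ≤ 1 then 1 else 0 := rfl
lemma M_succ2 (m : ℕ) (s : ℤ) :
    M (m + 2) s =
      if s ≤ 4 then M (m + 1) (s + 1) + (if -6 ≤ s then M (m + 1) (-(s + 1)) else 0) else 0 :=
  rfl

/-- `Good s α`: from state `s`, the list is a valid continuation. -/
def Good : ℤ → List ℕ → Prop
  | s, [] => |s| ≤ 1
  | s, a :: l => 1 ≤ a ∧ |s + (a : ℤ)| ≤ 5 ∧ Good (-(s + (a : ℤ))) l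

lemma good_nil (s : ℤ) : Good s [] ↔ |s| ≤ 1 := Iff.rfl
lemma good_cons (s : ℤ) (a : ℕ) (l : List ℕ) :
    Good s (a :: l) ↔ 1 ≤ a ∧ |s + (a : ℤ)| ≤ 5 ∧ Good (-(s + (a : ℤ))) l := Iff.rfl

def incHead : List ℕ → List ℕ
  | [] => []
  | a :: t => (a + 1) :: t

lemma incHead_cons (a : ℕ) (t : List ℕ) : incHead (a :: t) = (a + 1) :: t := rfl

def Q : ℕ → ℤ → Finset (List ℕ)
  | 0, s => if |s| ≤ 1 then {([] : List ℕ)} else ∅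
  | 1, s => if |s + 1| ≤ 1 then {[1]} else ∅
  | (m + 2), s =>
    if s ≤ 4 then
      (Q (m + 1) (s + 1)).image incHead ∪
        (if -6 ≤ s then (Q (m + 1) (-(s + 1))).image (List.cons 1) else ∅)
    else ∅

lemma Q_zero (s : ℤ) : Q 0 s = if |s| ≤ 1 then {([] : List ℕ)} else ∅ := rfl
lemma Q_one (s : ℤ) : Q 1 s = if |s + 1| ≤ 1 then {[1]} else ∅ := rfl
lemma Q_succ2 (m : ℕ) (s : ℤ) :
    Q (m + 2) s =
      if s ≤ 4 then
        (Q (m + 1) (s + 1)).image incHead ∪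
          (if -6 ≤ s then (Q (m + 1) (-(s + 1))).image (List.cons 1) else ∅)
      else ∅ := rfl

theorem mem_Q : ∀ (m : ℕ) (s : ℤ) (α : List ℕ), α ∈ Q m s ↔ α.sum = m ∧ Good s α
  | 0, s, α => by
    rw [Q_zero]
    split_ifs with h
    · simp only [Finset.mem_singleton]
      constructor
      · rintro rfl; exact ⟨rfl, h⟩
      · rintro ⟨hs, hg⟩
        cases α with
        | nil => rfl
        | cons a l =>
          rw [good_cons] at hg
          simp only [List.sum_cons] at hs
          omega
    · simp only [Finset.notMem_empty, false_iff, not_and]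
      intro hs hg
      cases α with
      | nil => exact h hg
      | cons a l =>
        rw [good_cons] at hg
        simp only [List.sum_cons] at hs
        omega
  | 1, s, α => by
    rw [Q_one]
    have key : (α.sum = 1 ∧ Good s α) ↔ (α = [1] ∧ |s + 1| ≤ 1) := by
      constructor
      · rintro ⟨hs, hg⟩
        cases α with
        | nil => simp at hs
        | cons a l =>
          rw [good_cons] at hg
          simp only [List.sum_cons] at hs
          have ha : a = 1 := by omega
          subst ha
          have hl : l = [] := by
            cases l with
            | nil => rfl
            | cons b t =>
              rw [good_cons] at hg
              simp at hs
              omega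
          subst hl
          rw [good_nil] at hg
          push_cast at hg
          refine ⟨rfl, ?_⟩
          have := hg.2.2
          rw [abs_le] at this ⊢
          omega
      · rintro ⟨rfl, h⟩
        refine ⟨by simp, ?_⟩
        rw [good_cons, good_nil]
        push_cast
        rw [abs_le] at h ⊢
        exact ⟨trivial, by omega, by rw [abs_le]; omega⟩
    rw [key]
    split_ifs with h
    · simp only [Finset.mem_singleton]
      constructor
      · rintro rfl; exact ⟨rfl, h⟩
      · rintro ⟨rfl, _⟩; rfl
    · simp only [Finset.notMem_empty, false_iff, not_and]
      intro h1; omega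
  | (m + 2), s, α => by
    have IH := mem_Q (m + 1)
    rw [Q_succ2]
    by_cases h4 : s ≤ 4
    · rw [if_pos h4, Finset.mem_union]
      constructor
      · rintro (hmem | hmem)
        · rw [Finset.mem_image] at hmem
          obtain ⟨β, hβ, rfl⟩ := hmem
          rw [IH] at hβ
          obtain ⟨hsum, hg⟩ := hβ
          cases β with
          | nil => simp at hsum
          | cons b t =>
            rw [good_cons] at hg
            simp only [List.sum_cons] at hsum
            show ((b+1) :: t).sum = m + 2 ∧ Good s ((b+1) :: t)
            rw [good_cons]
            obtain ⟨hb, habs, hgt⟩ := hg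
            refine ⟨by simp only [List.sum_cons]; omega, by omega, ?_, ?_⟩
            · push_cast
              have : s + ((b : ℤ) + 1) = s + 1 + (b : ℤ) := by ring
              rw [this]; exact habs
            · push_cast
              have : -(s + ((b : ℤ) + 1)) = -(s + 1 + (b : ℤ)) := by ring
              rw [this]; exact hgt
        · by_cases h6 : -6 ≤ s
          · rw [if_pos h6, Finset.mem_image] at hmem
            obtain ⟨t, ht, rfl⟩ := hmem
            rw [IH] at ht
            obtain ⟨hsum, hg⟩ := ht
            refine ⟨by simp only [List.sum_cons]; omega, ?_⟩
            rw [good_cons]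
            push_cast
            refine ⟨by norm_num, by rw [abs_le]; omega, hg⟩
          · rw [if_neg h6] at hmem
            exact absurd hmem (Finset.notMem_empty _)
      · rintro ⟨hsum, hg⟩
        cases α with
        | nil => simp at hsum
        | cons a l =>
          rw [good_cons] at hg
          obtain ⟨ha, habs, hgl⟩ := hg
          simp only [List.sum_cons] at hsum
          rcases Nat.lt_or_ge a 2 with ha2 | ha2
          · have ha1 : a = 1 := by omega
            subst ha1
            right
            have h6 : -6 ≤ s := by
              rw [abs_le] at habs
              push_cast at habs
              omega
            rw [if_pos h6, Finset.mem_image]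
            refine ⟨l, ?_, rfl⟩
            rw [IH]
            push_cast at hgl
            exact ⟨by omega, hgl⟩
          · left
            rw [Finset.mem_image]
            refine ⟨(a - 1) :: l, ?_, ?_⟩
            · rw [IH]
              refine ⟨by simp only [List.sum_cons]; omega, ?_⟩
              rw [good_cons]
              have hc : ((a - 1 : ℕ) : ℤ) = (a : ℤ) - 1 := by
                push_cast [Nat.cast_sub (by omega : 1 ≤ a)]; ring
              rw [hc]
              refine ⟨by omega, ?_, ?_⟩
              · have : s + 1 + ((a : ℤ) - 1) = s + (a : ℤ) := by ring
                rw [this]; exact habs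
              · have : -(s + 1 + ((a : ℤ) - 1)) = -(s + (a : ℤ)) := by ring
                rw [this]; exact hgl
            · show ((a - 1) + 1) :: l = a :: l
              congr 1
              omega
    · rw [if_neg h4]
      simp only [Finset.notMem_empty, false_iff, not_and]
      intro hsum hg
      cases α with
      | nil => simp at hsum
      | cons a l =>
        rw [good_cons] at hg
        obtain ⟨ha, habs, -⟩ := hg
        rw [abs_le] at habs
        omega

lemma Q_nonempty_mem {m : ℕ} {s : ℤ} {α : List ℕ} (h : α ∈ Q (m + 1) s) : α ≠ [] := by
  rw [mem_Q] at h
  intro hnil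
  subst hnil
  simp only [List.sum_nil] at h
  omega

theorem card_Q : ∀ (m : ℕ) (s : ℤ), (Q m s).card = M m s
  | 0, s => by
    rw [Q_zero, M_zero]; split_ifs <;> simp
  | 1, s => by
    rw [Q_one, M_one]; split_ifs <;> simp
  | (m + 2), s => by
    have IH := card_Q (m + 1)
    rw [Q_succ2, M_succ2]
    by_cases h4 : s ≤ 4
    · rw [if_pos h4, if_pos h4]
      rw [Finset.card_union_of_disjoint, Finset.card_image_of_injOn]
      · congr 1
        · exact IH _
        · by_cases h6 : -6 ≤ s
          · rw [if_pos h6, if_pos h6, Finset.card_image_of_injective _ (by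
              intro a b hab
              injection hab)]
            exact IH _
          · rw [if_neg h6, if_neg h6, Finset.card_empty]
      · intro a ha b hb hab
        have ha' := Q_nonempty_mem ha
        have hb' := Q_nonempty_mem hb
        cases a with
        | nil => exact absurd rfl ha'
        | cons x t =>
          cases b with
          | nil => exact absurd rfl hb'
          | cons y u =>
            rw [incHead_cons, incHead_cons] at hab
            injection hab with h1 h2
            subst h2
            congr 1
            omega
      · rw [Finset.disjoint_left]
        intro a ha hb
        rw [Finset.mem_image] at ha
        obtain ⟨β, hβ, rfl⟩ := ha
        have hβ' := Q_nonempty_mem hβ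
        cases β with
        | nil => exact absurd rfl hβ'
        | cons x t =>
          rw [incHead_cons] at hb
          by_cases h6 : -6 ≤ s
          · rw [if_pos h6, Finset.mem_image] at hb
            obtain ⟨u, _, hu⟩ := hb
            injection hu with h1 h2
            have hg := ((mem_Q (m + 1) (s + 1) (x :: t)).1 hβ).2
            rw [good_cons] at hg
            obtain ⟨hx, -, -⟩ := hg
            omega
          · rw [if_neg h6] at hb
            exact absurd hb (Finset.notMem_empty _)
    · rw [if_neg h4, if_neg h4, Finset.card_empty]

def psum (α : List ℕ) (k : ℕ) : ℤ := ∑ i ∈ Finset.range k, (-1 : ℤ) ^ i * (α.getD i 0 : ℤ)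

lemma psum_zero (α : List ℕ) : psum α 0 = 0 := by simp [psum]

lemma psum_cons (a : ℕ) (l : List ℕ) (k : ℕ) :
    psum (a :: l) (k + 1) = (a : ℤ) - psum l k := by
  unfold psum
  rw [Finset.sum_range_succ']
  have h1 : ∀ i ∈ Finset.range k,
      (-1 : ℤ) ^ (i + 1) * (((a :: l).getD (i + 1) 0 : ℕ) : ℤ) =
        -((-1 : ℤ) ^ i * ((l.getD i 0 : ℕ) : ℤ)) := by
    intro i _
    rw [List.getD_cons_succ, pow_succ]
    ring
  rw [Finset.sum_congr rfl h1, Finset.sum_neg_distrib]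
  simp only [pow_zero, one_mul, List.getD_cons_zero]
  ring

lemma psum_stable (α : List ℕ) {k : ℕ} (h : α.length ≤ k) : psum α k = psum α α.length := by
  induction k with
  | zero =>
    have h0 : α.length = 0 := by omega
    rw [h0]
  | succ k IH =>
    rcases Nat.lt_or_ge α.length (k + 1) with hlt | hge
    · have hk : α.length ≤ k := by omega
      rw [← IH hk]
      unfold psum
      rw [Finset.sum_range_succ, List.getD_eq_default α 0 hk]
      simp
    · have : α.length = k + 1 := by omega
      rw [this]

theorem good_iff : ∀ (α : List ℕ) (s : ℤ),
    Good s α ↔ (∀ a ∈ α, 1 ≤ a) ∧ |s + psum α α.length| ≤ 1 ∧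
      ∀ k, 1 ≤ k → k ≤ α.length → |s + psum α k| ≤ 5
  | [], s => by
    rw [good_nil]
    simp only [List.not_mem_nil, false_implies, implies_true, true_and, List.length_nil,
      psum_zero, add_zero]
    constructor
    · intro h; exact ⟨h, fun k hk hk' => by omega⟩
    · intro h; exact h.1
  | a :: l, s => by
    rw [good_cons, good_iff l (-(s + (a : ℤ)))]
    constructor
    · rintro ⟨ha, habs, hparts, hfin, hall⟩
      refine ⟨?_, ?_, ?_⟩
      · intro x hx
        rcases List.mem_cons.1 hx with rfl | hx
        · exact ha
        · exact hparts x hx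
      · simp only [List.length_cons, psum_cons]
        have : s + ((a : ℤ) - psum l l.length) = -(-(s + (a : ℤ)) + psum l l.length) := by ring
        rw [this, abs_neg]
        exact hfin
      · intro k hk hk'
        rcases k with _ | j
        · omega
        · rw [psum_cons]
          rcases Nat.eq_zero_or_pos j with rfl | hj
        
          · rw [psum_zero]
            simpa using habs
          · have : s + ((a : ℤ) - psum l j) = -(-(s + (a : ℤ)) + psum l j) := by ring
            rw [this, abs_neg]
            exact hall j hj (by simpa [List.length_cons] using hk')
    · rintro ⟨hparts, hfin, hall⟩
      have ha : 1 ≤ a := hparts a List.mem_cons_self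
      have habs : |s + (a : ℤ)| ≤ 5 := by
        have := hall 1 le_rfl (by simp)
        rw [psum_cons, psum_zero] at this
        simpa using this
      refine ⟨ha, habs, fun x hx => hparts x (List.mem_cons_of_mem a hx), ?_, ?_⟩
      · simp only [List.length_cons, psum_cons] at hfin
        have : -(s + (a : ℤ)) + psum l l.length = -(s + ((a : ℤ) - psum l l.length)) := by ring
        rw [this, abs_neg]
        exact hfin
      · intro k hk hk'
        have := hall (k + 1) (by omega) (by simp; omega)
        rw [psum_cons] at this
        have e : -(s + (a : ℤ)) + psum l k = -(s + ((a : ℤ) - psum l k)) := by ring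
        rw [e, abs_neg]
        exact this

theorem isDevSet_iff (m : ℕ) (α : List ℕ) : IsDevSet m 5 α ↔ α.sum = m ∧ Good 0 α := by
  rw [good_iff]
  constructor
  · rintro ⟨hpos, hsum, hfin, hall⟩
    refine ⟨hsum, fun x hx => hpos x hx, ?_, ?_⟩
    · rw [zero_add]; exact hfin
    · intro k hk hk'
      rw [zero_add]
      exact hall k
  · rintro ⟨hsum, hparts, hfin, hall⟩
    rw [zero_add] at hfin
    have hall' : ∀ k, 1 ≤ k → k ≤ α.length → |psum α k| ≤ 5 := by
      intro k h1 h2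
      have := hall k h1 h2
      rwa [zero_add] at this
    refine ⟨fun x hx => hparts x hx, hsum, hfin, ?_⟩
    intro k
    show |psum α k| ≤ ((5 : ℕ) : ℤ)
    rcases Nat.lt_or_ge k 1 with hk | hk
    · have : k = 0 := by omega
      subst this
      rw [psum_zero]
      norm_num
    · rcases le_or_gt k α.length with hk' | hk'
      · exact hall' k hk hk'
      · rw [psum_stable α (by omega : α.length ≤ k)]
        exact le_trans hfin (by norm_num)

theorem zeta_eq_M (m : ℕ) : zeta m 5 = M m 0 := by
  unfold zeta
  rw [← card_Q m 0, ← Nat.card_eq_finsetCard]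
  exact Nat.card_congr
    (Equiv.subtypeEquivRight fun α => (isDevSet_iff m α).trans (mem_Q m 0 α).symm)

theorem iden : ∀ m : ℕ, 1 ≤ m → ∀ s : ℤ, -(m : ℤ) - 5 ≤ s →
    M (m + 6) s + 9 * M (m + 2) s = 6 * M (m + 4) s + 2 * M m s := by
  intro m hm
  induction m, hm using Nat.le_induction with
  | base =>
    intro s hs
    by_cases h4 : s ≤ 4
    · interval_cases s <;> decide
    · have e7 : M 7 s = 0 := by
        rw [show (7 : ℕ) = 5 + 2 from rfl, M_succ2, if_neg h4]
      have e5 : M 5 s = 0 := by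
        rw [show (5 : ℕ) = 3 + 2 from rfl, M_succ2, if_neg h4]
      have e3 : M 3 s = 0 := by
        rw [show (3 : ℕ) = 1 + 2 from rfl, M_succ2, if_neg h4]
      have e1 : M 1 s = 0 := by
        rw [M_one, if_neg]
        rw [abs_le]
        omega
      rw [show (1 : ℕ) + 6 = 7 from rfl, show (1 : ℕ) + 2 = 3 from rfl,
        show (1 : ℕ) + 4 = 5 from rfl, e7, e5, e3, e1]
  | succ m hm IH =>
    intro s hs
    have r7 : M (m + 1 + 6) s =
        if s ≤ 4 then M (m + 6) (s + 1) + (if -6 ≤ s then M (m + 6) (-(s + 1)) else 0) else 0 := by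
      rw [show m + 1 + 6 = (m + 5) + 2 by omega, M_succ2, show m + 5 + 1 = m + 6 by omega]
    have r5 : M (m + 1 + 4) s =
        if s ≤ 4 then M (m + 4) (s + 1) + (if -6 ≤ s then M (m + 4) (-(s + 1)) else 0) else 0 := by
      rw [show m + 1 + 4 = (m + 3) + 2 by omega, M_succ2, show m + 3 + 1 = m + 4 by omega]
    have r3 : M (m + 1 + 2) s =
        if s ≤ 4 then M (m + 2) (s + 1) + (if -6 ≤ s then M (m + 2) (-(s + 1)) else 0) else 0 := by
      rw [M_succ2]
    have r1 : M (m + 1) s =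
        if s ≤ 4 then M m (s + 1) + (if -6 ≤ s then M m (-(s + 1)) else 0) else 0 := by
      rw [show m + 1 = (m - 1) + 2 by omega, M_succ2, show m - 1 + 1 = m by omega]
    rw [r7, r5, r3, r1]
    by_cases h4 : s ≤ 4
    · rw [if_pos h4, if_pos h4, if_pos h4, if_pos h4]
      by_cases h6 : -6 ≤ s
      · rw [if_pos h6, if_pos h6, if_pos h6, if_pos h6]
        have IH1 := IH (s + 1) (by omega)
        have IH2 := IH (-(s + 1)) (by omega)
        omega
      · rw [if_neg h6, if_neg h6, if_neg h6, if_neg h6]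
        have IH1 := IH (s + 1) (by omega)
        omega
    · rw [if_neg h4, if_neg h4, if_neg h4, if_neg h4]

lemma sqrt3_sq : Real.sqrt 3 ^ 2 = 3 := Real.sq_sqrt (by norm_num)

lemma grec (n : ℕ) :
    ((2 + Real.sqrt 3) ^ (n + 3) + (2 - Real.sqrt 3) ^ (n + 3) + 2 ^ (n + 3)) +
      9 * ((2 + Real.sqrt 3) ^ (n + 1) + (2 - Real.sqrt 3) ^ (n + 1) + 2 ^ (n + 1)) =
    6 * ((2 + Real.sqrt 3) ^ (n + 2) + (2 - Real.sqrt 3) ^ (n + 2) + 2 ^ (n + 2)) +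
      2 * ((2 + Real.sqrt 3) ^ n + (2 - Real.sqrt 3) ^ n + 2 ^ n) := by
  have h3 := sqrt3_sq
  linear_combination (Real.sqrt 3 * ((2 + Real.sqrt 3) ^ n - (2 - Real.sqrt 3) ^ n)) * h3

theorem M_formula : ∀ m : ℕ, 1 ≤ m →
    ((M m 0 : ℕ) : ℝ) =
      ((2 + Real.sqrt 3) ^ ((m + 1) / 2) + (2 - Real.sqrt 3) ^ ((m + 1) / 2) +
        2 ^ ((m + 1) / 2)) / 6 := by
  intro m
  induction m using Nat.strong_induction_on with
  | _ m IH =>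
    intro hm
    have h3 := sqrt3_sq
    rcases le_or_gt m 6 with h6 | h6
    · interval_cases m
      · rw [show M 1 0 = 1 from by decide]
        norm_num
      · rw [show M 2 0 = 1 from by decide]
        norm_num
      · rw [show M 3 0 = 3 from by decide]
        norm_num
        linear_combination (-1 / 3 : ℝ) * h3
      · rw [show M 4 0 = 3 from by decide]
        norm_num
        linear_combination (-1 / 3 : ℝ) * h3
      · rw [show M 5 0 = 10 from by decide]
        norm_num
        linear_combination (-2 : ℝ) * h3
      · rw [show M 6 0 = 10 from by decide]
        norm_num
        linear_combination (-2 : ℝ) * h3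
    · obtain ⟨k, rfl⟩ : ∃ k, m = k + 7 := ⟨m - 7, by omega⟩
      have H := iden (k + 1) (by omega) 0 (by omega)
      rw [show k + 1 + 6 = k + 7 by omega, show k + 1 + 2 = k + 3 by omega,
        show k + 1 + 4 = k + 5 by omega] at H
      have HR := congrArg (Nat.cast : ℕ → ℝ) H
      push_cast at HR
      have I1 := IH (k + 1) (by omega) (by omega)
      have I3 := IH (k + 3) (by omega) (by omega)
      have I5 := IH (k + 5) (by omega) (by omega)
      rw [I1, I3, I5] at HR
      have e1 : (k + 1 + 1) / 2 + 1 = (k + 3 + 1) / 2 := by omega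
      have e2 : (k + 1 + 1) / 2 + 2 = (k + 5 + 1) / 2 := by omega
      have e3 : (k + 1 + 1) / 2 + 3 = (k + 7 + 1) / 2 := by omega
      have G := grec ((k + 1 + 1) / 2)
      rw [e1, e2, e3] at G
      linarith [HR, G]


/-- `ζ(m,5) = ((2+√3)^⌊(m+1)/2⌋ + (2−√3)^⌊(m+1)/2⌋ + 2^⌊(m+1)/2⌋)/6` for all `m ≥ 1`. -/
theorem zeta_five (m : ℕ) (hm : 1 ≤ m) :
    (zeta m 5 : ℝ) =
      ((2 + Real.sqrt 3) ^ ((m + 1) / 2) + (2 - Real.sqrt 3) ^ ((m + 1) / 2) +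
        2 ^ ((m + 1) / 2)) / 6 := by
  rw [zeta_eq_M m]
  exact M_formula m hm
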